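/- For the relativistic energy φ(v) = √(1+v²) − 1, the function f(y) = |y|(y²+1)/√((y²+1)² − 1) satisfies: (i) f(y) ≤ K e^{b y²} for suitable K ≥ 0, b > 0; (ii) ∫_ℝ (1 - y²) f(y) dy < 0 (interpreted via ∫ e^{-γ y²}(1-y²)f(y)dy < 0 for small γ); and (iii) ∫_{|y|≤1} (1 - y²) f(y) dy > 0. -/

import Mathlib

open MeasureTheory Real

lemma aux_int_pow {b : ℝ} (hb : 0 < b) (n : ℕ) :
    Integrable (fun x : ℝ => x ^ n * Real.exp (-b * x ^ 2)) := by
  have h : (-1 : ℝ) < (n : ℝ) :=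
    lt_of_lt_of_le (by norm_num) (Nat.cast_nonneg n)
  simpa [Real.rpow_natCast] using integrable_rpow_mul_exp_neg_mul_sq hb h

/-- For the relativistic energy `φ(v) = √(1+v²) - 1`, the function
`f(y) = |y|(y²+1)/√((y²+1)²-1)` satisfies the exponential bound, the negativity
condition `∫ e^{-γy²}(1-y²) f < 0` for small `γ > 0`, and `∫_{|y|≤1}(1-y²) f > 0`. -/
theorem stmt9 (f : ℝ → ℝ)
    (hf : ∀ y, f y = |y| * (y ^ 2 + 1) / Real.sqrt ((y ^ 2 + 1) ^ 2 - 1)) :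
    (∃ K ≥ (0 : ℝ), ∃ b > (0 : ℝ), ∀ y, f y ≤ K * Real.exp (b * y ^ 2)) ∧
    (∃ γ₀ > (0 : ℝ), ∀ γ ∈ Set.Ioo (0 : ℝ) γ₀,
      (∫ y : ℝ, Real.exp (-γ * y ^ 2) * (1 - y ^ 2) * f y) < 0) ∧
    0 < ∫ y in Set.Icc (-1 : ℝ) 1, (1 - y ^ 2) * f y := by
  -- basic facts about f
  have hf0 : f 0 = 0 := by simp [hf]
  have hfe : ∀ y : ℝ, y ≠ 0 → f y = (y ^ 2 + 1) / Real.sqrt (y ^ 2 + 2) := by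
    intro y hy
    have h1 : (y ^ 2 + 1) ^ 2 - 1 = y ^ 2 * (y ^ 2 + 2) := by ring
    rw [hf, h1, Real.sqrt_mul (sq_nonneg y), Real.sqrt_sq_eq_abs,
      mul_div_mul_left _ _ (abs_ne_zero.2 hy)]
  have hf_nonneg : ∀ y : ℝ, 0 ≤ f y := by
    intro y; rw [hf]; positivity
  have hf_le : ∀ y : ℝ, f y ≤ y ^ 2 + 1 := by
    intro y
    rcases eq_or_ne y 0 with h | h
    · rw [h, hf0]; norm_num
    · rw [hfe y h]
      exact div_le_self (by positivity) (Real.one_le_sqrt.2 (by nlinarith))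
  have hf_ge1 : ∀ y : ℝ, 2 ≤ y → 1 ≤ f y := by
    intro y hy
    have hy0 : y ≠ 0 := by intro h; rw [h] at hy; norm_num at hy
    rw [hfe y hy0]
    have hs : Real.sqrt (y ^ 2 + 2) ≤ y ^ 2 + 1 := by
      have h1 : Real.sqrt (y ^ 2 + 2) ≤ Real.sqrt ((y ^ 2 + 1) ^ 2) :=
        Real.sqrt_le_sqrt (by nlinarith)
      rwa [Real.sqrt_sq (by positivity)] at h1
    rw [le_div_iff₀ (Real.sqrt_pos.2 (by positivity))]
    linarith
  have hfm : Measurable f := by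
    have : f = fun y => |y| * (y ^ 2 + 1) / Real.sqrt ((y ^ 2 + 1) ^ 2 - 1) := funext hf
    rw [this]
    fun_prop
  refine ⟨⟨1, by norm_num, 1, one_pos, fun y => ?_⟩, ?_, ?_⟩
  · -- (i)
    have := Real.add_one_le_exp (y ^ 2)
    have h2 := hf_le y
    simpa [one_mul] using h2.trans (by linarith)
  · -- (ii)
    refine ⟨1 / 50, by norm_num, fun γ hγ => ?_⟩
    obtain ⟨hγ0, hγ1⟩ := hγ
    set g : ℝ → ℝ := fun y => Real.exp (-γ * y ^ 2) * (1 - y ^ 2) * f y with hg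
    have hgm : Measurable g := by fun_prop
    -- integrability of g
    have hg_int : Integrable g := by
      have hdom : Integrable (fun y : ℝ =>
          Real.exp (-γ * y ^ 2) + 2 * (y ^ 2 * Real.exp (-γ * y ^ 2))
            + y ^ 4 * Real.exp (-γ * y ^ 2)) :=
        ((integrable_exp_neg_mul_sq hγ0).add
          ((aux_int_pow hγ0 2).const_mul 2)).add (aux_int_pow hγ0 4)
      refine hdom.mono' hgm.aestronglyMeasurable (ae_of_all _ fun y => ?_)
      have hE : 0 < Real.exp (-γ * y ^ 2) := Real.exp_pos _
      have h1 : |1 - y ^ 2| ≤ 1 + y ^ 2 := by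
        rw [abs_le]; constructor <;> nlinarith [sq_nonneg y]
      have h2 : |f y| ≤ y ^ 2 + 1 := by
        rw [abs_of_nonneg (hf_nonneg y)]; exact hf_le y
      have : ‖g y‖ ≤ Real.exp (-γ * y ^ 2) * (1 + y ^ 2) * (1 + y ^ 2) := by
        rw [hg]
        simp only [Real.norm_eq_abs, abs_mul, abs_of_pos hE]
        have hA : Real.exp (-γ * y ^ 2) * |1 - y ^ 2|
            ≤ Real.exp (-γ * y ^ 2) * (1 + y ^ 2) :=
          mul_le_mul_of_nonneg_left h1 hE.le
        exact mul_le_mul hA (h2.trans_eq (add_comm _ _)) (abs_nonneg _) (by positivity)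
      refine this.trans (le_of_eq ?_)
      ring
    have hs : MeasurableSet (Set.Icc (-1 : ℝ) 1) := measurableSet_Icc
    have hsplit := integral_add_compl hs hg_int
    -- bound on Icc (-1) 1
    have hIcc : (∫ y in Set.Icc (-1 : ℝ) 1, g y) ≤ 4 := by
      have hb : ∀ y ∈ Set.Icc (-1 : ℝ) 1, g y ≤ 2 := by
        intro y hy
        obtain ⟨hy1, hy2⟩ := hy
        have hE1 : Real.exp (-γ * y ^ 2) ≤ 1 := by
          rw [Real.exp_le_one_iff]
          nlinarith [sq_nonneg y]
        have hE0 : 0 ≤ Real.exp (-γ * y ^ 2) := (Real.exp_pos _).le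
        have hy3 : 0 ≤ 1 - y ^ 2 := by nlinarith
        have hy4 : 1 - y ^ 2 ≤ 1 := by nlinarith [sq_nonneg y]
        have hfy : f y ≤ 2 := by nlinarith [hf_le y]
        have hfy0 : 0 ≤ f y := hf_nonneg y
        show Real.exp (-γ * y ^ 2) * (1 - y ^ 2) * f y ≤ 2
        calc Real.exp (-γ * y ^ 2) * (1 - y ^ 2) * f y
            ≤ 1 * 1 * 2 :=
              mul_le_mul (mul_le_mul hE1 hy4 hy3 zero_le_one) hfy hfy0 (by norm_num)
          _ = 2 := by norm_num
      calc (∫ y in Set.Icc (-1 : ℝ) 1, g y)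
          ≤ ∫ _ in Set.Icc (-1 : ℝ) 1, (2 : ℝ) :=
            setIntegral_mono_on hg_int.integrableOn
              (integrableOn_const (by simp)) hs hb
        _ = 4 := by
            rw [setIntegral_const]
            simp [Real.volume_Icc]
            norm_num
    -- bound on complement via Icc 2 5
    have hsub : Set.Icc (2 : ℝ) 5 ⊆ (Set.Icc (-1 : ℝ) 1)ᶜ := by
      intro y hy
      simp only [Set.mem_compl_iff, Set.mem_Icc, not_and_or, not_le]
      right; linarith [hy.1]
    have hneg : ∀ y ∈ (Set.Icc (-1 : ℝ) 1)ᶜ, g y ≤ 0 := by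
      intro y hy
      simp only [Set.mem_compl_iff, Set.mem_Icc, not_and_or, not_le] at hy
      have hy2 : 1 < y ^ 2 := by rcases hy with h | h <;> nlinarith
      show Real.exp (-γ * y ^ 2) * (1 - y ^ 2) * f y ≤ 0
      exact mul_nonpos_of_nonpos_of_nonneg
        (mul_nonpos_of_nonneg_of_nonpos (Real.exp_pos _).le (by linarith))
        (hf_nonneg y)
    have hcompl_le : (∫ y in (Set.Icc (-1 : ℝ) 1)ᶜ, g y)
        ≤ ∫ y in Set.Icc (2 : ℝ) 5, g y := by
      have h := setIntegral_mono_set (f := fun y => -g y)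
        (hg_int.neg.integrableOn (s := (Set.Icc (-1 : ℝ) 1)ᶜ))
        ((ae_restrict_iff' hs.compl).2 (ae_of_all _ fun y hy => by
          simpa using hneg y hy))
        (HasSubset.Subset.eventuallyLE hsub)
      simp only [integral_neg] at h
      linarith
    have hA : (∫ y in Set.Icc (2 : ℝ) 5, g y) ≤ -(9 * Real.exp (-(1 / 2 : ℝ))) := by
      have hb : ∀ y ∈ Set.Icc (2 : ℝ) 5, g y ≤ -(3 * Real.exp (-(1 / 2 : ℝ))) := by
        intro y hy
        obtain ⟨hy1, hy2⟩ := hy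
        have hfy : 1 ≤ f y := hf_ge1 y hy1
        have h1 : (1 - y ^ 2) * f y ≤ -3 := by
          nlinarith [mul_nonneg (by nlinarith : (0:ℝ) ≤ y ^ 2 - 1) (by linarith : (0:ℝ) ≤ f y - 1)]
        have hE1 : Real.exp (-(1 / 2 : ℝ)) ≤ Real.exp (-γ * y ^ 2) := by
          apply Real.exp_le_exp.2
          nlinarith [sq_nonneg y]
        have hE0 : 0 < Real.exp (-γ * y ^ 2) := Real.exp_pos _
        have h2 : Real.exp (-γ * y ^ 2) * ((1 - y ^ 2) * f y)
            ≤ Real.exp (-γ * y ^ 2) * (-3) :=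
          mul_le_mul_of_nonneg_left h1 hE0.le
        have h3 : Real.exp (-γ * y ^ 2) * (-3) ≤ Real.exp (-(1 / 2 : ℝ)) * (-3) := by
          nlinarith
        rw [hg]
        calc Real.exp (-γ * y ^ 2) * (1 - y ^ 2) * f y
            = Real.exp (-γ * y ^ 2) * ((1 - y ^ 2) * f y) := by ring
          _ ≤ Real.exp (-(1 / 2 : ℝ)) * (-3) := le_trans h2 h3
          _ = -(3 * Real.exp (-(1 / 2 : ℝ))) := by ring
      calc (∫ y in Set.Icc (2 : ℝ) 5, g y)
          ≤ ∫ _ in Set.Icc (2 : ℝ) 5, (-(3 * Real.exp (-(1 / 2 : ℝ)))) :=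
            setIntegral_mono_on hg_int.integrableOn
              (integrableOn_const (by simp)) measurableSet_Icc hb
        _ = -(9 * Real.exp (-(1 / 2 : ℝ))) := by
            rw [setIntegral_const]
            simp [Real.volume_Icc]
            norm_num
            ring
    -- conclude
    have hexp : (4 : ℝ) / 9 < Real.exp (-(1 / 2 : ℝ)) := by
      have h1 : Real.exp (1 / 2 : ℝ) < 9 / 4 := by
        have hsq : Real.exp (1 / 2 : ℝ) * Real.exp (1 / 2 : ℝ) = Real.exp 1 := by
          rw [← Real.exp_add]; norm_num
        nlinarith [Real.exp_pos (1 / 2 : ℝ), Real.exp_one_lt_d9]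
      have h2 : Real.exp (-(1 / 2 : ℝ)) = (Real.exp (1 / 2 : ℝ))⁻¹ := by
        rw [Real.exp_neg]
      rw [h2]
      have hp : 0 < Real.exp (1 / 2 : ℝ) := Real.exp_pos _
      rw [lt_inv_comm₀ (by norm_num) hp]
      linarith
    have : (∫ y : ℝ, g y) < 0 := by
      rw [← hsplit]
      have := hcompl_le.trans hA
      linarith
    exact this
  · -- (iii)
    have hae : (fun y => (1 - y ^ 2) * f y)
        =ᵐ[volume] fun y => (1 - y ^ 2) * ((y ^ 2 + 1) / Real.sqrt (y ^ 2 + 2)) := by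
      have h0 : (volume : Measure ℝ) {(0 : ℝ)} = 0 := measure_singleton 0
      refine (ae_iff.2 ?_)
      refine measure_mono_null (fun y hy => ?_) h0
      simp only [Set.mem_setOf_eq] at hy
      by_contra hy0
      exact hy (by rw [hfe y (by simpa using hy0)])
    rw [setIntegral_congr_ae measurableSet_Icc (hae.mono fun y hy _ => hy)]
    have hcont : Continuous fun y : ℝ => (1 - y ^ 2) * ((y ^ 2 + 1) / Real.sqrt (y ^ 2 + 2)) := by
      have hc1 : Continuous fun y : ℝ => Real.sqrt (y ^ 2 + 2) :=
        Real.continuous_sqrt.comp (by fun_prop)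
      exact (by fun_prop : Continuous fun y : ℝ => 1 - y ^ 2).mul
        ((by fun_prop : Continuous fun y : ℝ => y ^ 2 + 1).div hc1
          fun y => ne_of_gt (Real.sqrt_pos.2 (by positivity)))
    rw [integral_Icc_eq_integral_Ioc,
      ← intervalIntegral.integral_of_le (by norm_num : (-1 : ℝ) ≤ 1)]
    apply intervalIntegral.intervalIntegral_pos_of_pos_on
      (hcont.intervalIntegrable _ _)
      (fun y hy => ?_) (by norm_num)
    obtain ⟨hy1, hy2⟩ := hy
    have h1 : 0 < 1 - y ^ 2 := by nlinarith
    have h2 : 0 < (y ^ 2 + 1) / Real.sqrt (y ^ 2 + 2) := by positivity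
    exact mul_pos h1 h2
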